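/- Let k be a field and A a k-linear abelian category that is Hom-finite, i.e. Hom_A(X,Y) is finite-dimensional over k for all objects X, Y. Let X be an object of A and f : X → X an endomorphism that is not an isomorphism, and let I = im(f) be the image of f. Then dim_k End_A(I) < dim_k End_A(X). -/

import Mathlib

open CategoryTheory Limits

universe v u

/-- Let `k` be a field and `A` a Hom-finite `k`-linear abelian category.
If `f : X ⟶ X` is an endomorphism which is not an isomorphism, and `I = im f` is its image,
then `dim_k End(I) < dim_k End(X)`. -/
theorem dim_end_image_lt_dim_end_of_not_isIso
    (k : Type*) [Field k] (A : Type u) [Category.{v} A] [Abelian A] [Linear k A]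
    (homFinite : ∀ X Y : A, FiniteDimensional k (X ⟶ Y))
    (X : A) (f : X ⟶ X) (hf : ¬ IsIso f) :
    Module.finrank k (Abelian.image f ⟶ Abelian.image f) <
      Module.finrank k (X ⟶ X) := by
  haveI := homFinite X X
  haveI := homFinite (Abelian.image f) (Abelian.image f)
  set I := Abelian.image f
  set p : X ⟶ I := Abelian.factorThruImage f
  set i : I ⟶ X := Abelian.image.ι f
  have hfac : p ≫ i = f := Abelian.image.fac f
  let φ : (I ⟶ I) →ₗ[k] (X ⟶ X) :=
    (Linear.leftComp k X p).comp (Linear.rightComp k I i)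
  have hφ : ∀ g : I ⟶ I, φ g = p ≫ g ≫ i := fun g => rfl
  have hinj : Function.Injective φ := by
    intro g h hgh
    simp only [hφ] at hgh
    rw [cancel_epi p, cancel_mono i] at hgh
    exact hgh
  have hne : LinearMap.range φ < ⊤ := by
    rw [lt_top_iff_ne_top]
    intro htop
    obtain ⟨g, hg⟩ := (LinearMap.range_eq_top.mp htop) (𝟙 X)
    rw [hφ] at hg
    haveI : IsSplitMono p := ⟨⟨⟨g ≫ i, by rw [← Category.assoc] at hg ⊢; exact hg⟩⟩⟩
    haveI : IsSplitEpi i := ⟨⟨⟨p ≫ g, by rw [Category.assoc]; exact hg⟩⟩⟩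
    haveI : IsIso p := isIso_of_mono_of_epi p
    haveI : IsIso i := isIso_of_mono_of_epi i
    exact hf (hfac ▸ inferInstance)
  calc Module.finrank k (I ⟶ I) = Module.finrank k (LinearMap.range φ) :=
        (LinearMap.finrank_range_of_inj hinj).symm
    _ < Module.finrank k (X ⟶ X) := Submodule.finrank_lt hne.ne
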